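/- Let V be a finite set, G ⊆ V nonempty, A ⊆ B ⊆ V, and x ∈ G with x ∉ B. Then for f(A) = |G ∩ A| / |G ∪ A| in ℚ one has the exact identity f(A ∪ {x}) − f(A) − (f(B ∪ {x}) − f(B)) = 1/|G ∪ A| − 1/|G ∪ B|, and this quantity is nonnegative, with strict positivity whenever |G ∪ A| < |G ∪ B|. -/

import Mathlib

lemma jaccard_marg {α : Type*} [DecidableEq α] (G S : Finset α)
    (f : Finset α → ℚ)
    (hf : ∀ S : Finset α, f S = ((G ∩ S).card : ℚ) / ((G ∪ S).card : ℚ))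
    (x : α) (hxG : x ∈ G) (hxS : x ∉ S) :
    f (S ∪ {x}) - f S = 1 / ((G ∪ S).card : ℚ) := by
  have hU : G ∪ (S ∪ {x}) = G ∪ S := by
    ext a; simp only [Finset.mem_union, Finset.mem_singleton]
    constructor
    · rintro (h | h | rfl) <;> simp [*]
    · rintro (h | h) <;> simp [*]
  have hI : G ∩ (S ∪ {x}) = (G ∩ S) ∪ {x} := by
    ext a; simp only [Finset.mem_inter, Finset.mem_union, Finset.mem_singleton]
    constructor
    · rintro ⟨h, h' | rfl⟩ <;> simp [*]
    · rintro (⟨h, h'⟩ | rfl) <;> simp [*]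
  have hxGS : x ∉ G ∩ S := by simp [hxS]
  have hcard : ((G ∩ S) ∪ {x}).card = (G ∩ S).card + 1 := by
    have : G ∩ S ∪ {x} = insert x (G ∩ S) := by ext a; simp [or_comm]
    rw [this, Finset.card_insert_of_notMem hxGS]
  have hpos : 0 < ((G ∪ S).card : ℚ) := by
    have : x ∈ G ∪ S := Finset.mem_union_left _ hxG
    exact_mod_cast Finset.card_pos.mpr ⟨x, this⟩
  rw [hf, hf, hU, hI, hcard]
  push_cast
  field_simp
  ring

/-- Case (i) of the non-supermodularity argument: for `x ∈ G`, `x ∉ B`, the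
difference of marginal gains of `f A = |G ∩ A| / |G ∪ A|` equals
`1/|G ∪ A| - 1/|G ∪ B|`, which is nonnegative, and strictly positive when
`|G ∪ A| < |G ∪ B|`. -/
theorem jaccard_case_x_mem_G {α : Type*} [DecidableEq α]
    (V G A B : Finset α) (hGV : G ⊆ V) (hG : G.Nonempty)
    (hAB : A ⊆ B) (hBV : B ⊆ V)
    (f : Finset α → ℚ)
    (hf : ∀ S : Finset α, f S = ((G ∩ S).card : ℚ) / ((G ∪ S).card : ℚ))
    (x : α) (hxG : x ∈ G) (hxB : x ∉ B) :
    f (A ∪ {x}) - f A - (f (B ∪ {x}) - f B) =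
      1 / ((G ∪ A).card : ℚ) - 1 / ((G ∪ B).card : ℚ) ∧
    0 ≤ 1 / ((G ∪ A).card : ℚ) - 1 / ((G ∪ B).card : ℚ) ∧
    ((G ∪ A).card < (G ∪ B).card →
      0 < 1 / ((G ∪ A).card : ℚ) - 1 / ((G ∪ B).card : ℚ)) := by
  have hxA : x ∉ A := fun h => hxB (hAB h)
  have h1 := jaccard_marg G A f hf x hxG hxA
  have h2 := jaccard_marg G B f hf x hxG hxB
  have hposA : 0 < ((G ∪ A).card : ℚ) := by
    exact_mod_cast Finset.card_pos.mpr ⟨x, Finset.mem_union_left _ hxG⟩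
  have hposB : 0 < ((G ∪ B).card : ℚ) := by
    exact_mod_cast Finset.card_pos.mpr ⟨x, Finset.mem_union_left _ hxG⟩
  have hle : ((G ∪ A).card : ℚ) ≤ ((G ∪ B).card : ℚ) := by
    exact_mod_cast Finset.card_le_card (Finset.union_subset_union_right hAB)
  refine ⟨by rw [h1, h2], ?_, ?_⟩
  · have := one_div_le_one_div_of_le hposA hle
    linarith
  · intro hlt
    have hlt' : ((G ∪ A).card : ℚ) < ((G ∪ B).card : ℚ) := by exact_mod_cast hlt
    have := one_div_lt_one_div_of_lt hposA hlt'
    linarith
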